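/- Let ζ₁,…,ζₙ be i.i.d. real random variables, S_i the random walk, σ = max{i ≤ n : S_i ≤ 0}, and assume P(S_σ = 0) > 0. Then conditionally on {S_σ = 0}, for each k the pair (→F, ←F) = (last time of min on [0,σ], σ − first time of min on [0,σ]) has exchangeable components: (→F, ←F) and (←F, →F) have the same joint distribution. -/

import Mathlib

open MeasureTheory ProbabilityTheory Finset

namespace Stmt19Aux

variable (n : ℕ)

/-- padded increment sequence -/
noncomputable def pad (v : Fin n → ℝ) (j : ℕ) : ℝ := if h : j < n then v ⟨j, h⟩ else 0

/-- walk -/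
noncomputable def W (v : Fin n → ℝ) (i : ℕ) : ℝ := ∑ j ∈ Finset.range i, pad n v j

noncomputable def pσ (v : Fin n → ℝ) : ℕ := sSup {i | i ≤ n ∧ W n v i ≤ 0}

noncomputable def MS (v : Fin n → ℝ) : Set ℕ :=
  {i | i ≤ pσ n v ∧ ∀ j ≤ pσ n v, W n v i ≤ W n v j}

noncomputable def pF (v : Fin n → ℝ) : ℕ := sSup (MS n v)
noncomputable def pF' (v : Fin n → ℝ) : ℕ := pσ n v - sInf (MS n v)

variable {n}

lemma W_zero (v : Fin n → ℝ) : W n v 0 = 0 := by simp [W]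

lemma W_succ (v : Fin n → ℝ) (i : ℕ) : W n v (i + 1) = W n v i + pad n v i := by
  simp [W, Finset.sum_range_succ]

lemma sSup_nat_eq_iff {T : Set ℕ} {N m : ℕ} (h0 : 0 ∈ T) (hb : ∀ t ∈ T, t ≤ N) :
    sSup T = m ↔ m ∈ T ∧ ∀ j ∈ T, j ≤ m := by
  constructor
  · rintro rfl
    exact ⟨Nat.sSup_mem ⟨0, h0⟩ ⟨N, hb⟩, fun j hj => le_csSup ⟨N, hb⟩ hj⟩
  · rintro ⟨hm, hmax⟩
    exact le_antisymm (csSup_le ⟨0, h0⟩ hmax) (le_csSup ⟨N, hb⟩ hm)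

lemma pσ_eq_iff {v : Fin n → ℝ} {m : ℕ} :
    pσ n v = m ↔ (m ≤ n ∧ W n v m ≤ 0 ∧ ∀ j, m < j → j ≤ n → 0 < W n v j) := by
  rw [pσ, sSup_nat_eq_iff (by simp [W_zero]) (fun t ht => ht.1)]
  constructor
  · rintro ⟨⟨h1, h2⟩, h3⟩
    refine ⟨h1, h2, fun j hj hjn => ?_⟩
    by_contra h
    exact absurd (h3 j ⟨hjn, not_lt.1 h⟩) (not_le.2 hj)
  · rintro ⟨h1, h2, h3⟩
    refine ⟨⟨h1, h2⟩, fun j hj => ?_⟩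
    by_contra h
    exact absurd hj.2 (not_le.2 (h3 j (not_le.1 h) hj.1))

lemma pσ_le (v : Fin n → ℝ) : pσ n v ≤ n := (pσ_eq_iff.1 rfl).1

lemma MS_nonempty (v : Fin n → ℝ) : (MS n v).Nonempty := by
  have hfin : ((fun j => W n v j) '' Set.Iic (pσ n v)).Finite :=
    (Set.finite_Iic _).image _
  have hne : ((fun j => W n v j) '' Set.Iic (pσ n v)).Nonempty :=
    ⟨W n v 0, 0, Set.mem_Iic.2 (Nat.zero_le _), rfl⟩
  obtain ⟨j0, hj0, hj0e⟩ := hne.csInf_mem hfin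
  simp only [] at hj0e
  refine ⟨j0, hj0, fun j hj => ?_⟩
  rw [show W n v j0 = _ from hj0e]
  exact csInf_le hfin.bddBelow ⟨j, hj, rfl⟩

lemma MS_subset (v : Fin n → ℝ) : MS n v ⊆ Set.Iic (pσ n v) := fun _ h => h.1

/-- The set in the theorem statement equals `MS`. -/
lemma MS_eq (v : Fin n → ℝ) :
    {i | i ≤ pσ n v ∧ W n v i = sInf ((fun j => W n v j) '' Set.Iic (pσ n v))} = MS n v := by
  have hfin : ((fun j => W n v j) '' Set.Iic (pσ n v)).Finite :=
    (Set.finite_Iic _).image _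
  have hne : ((fun j => W n v j) '' Set.Iic (pσ n v)).Nonempty :=
    ⟨W n v 0, 0, Set.mem_Iic.2 (Nat.zero_le _), rfl⟩
  ext i
  simp only [Set.mem_setOf_eq, MS]
  constructor
  · rintro ⟨hi, he⟩
    exact ⟨hi, fun j hj => he ▸ csInf_le hfin.bddBelow ⟨j, hj, rfl⟩⟩
  · rintro ⟨hi, hmin⟩
    refine ⟨hi, le_antisymm ?_ (csInf_le hfin.bddBelow ⟨i, hi, rfl⟩)⟩
    obtain ⟨j0, hj0, hj0e⟩ := hne.csInf_mem hfin
    rw [← hj0e]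
    exact hmin j0 hj0

lemma pF_mem (v : Fin n → ℝ) : pF n v ∈ MS n v :=
  Nat.sSup_mem (MS_nonempty v) ⟨pσ n v, fun _ h => h.1⟩

lemma le_pF {v : Fin n → ℝ} {j : ℕ} (hj : j ∈ MS n v) : j ≤ pF n v :=
  le_csSup ⟨pσ n v, fun _ h => h.1⟩ hj

lemma sInf_MS_mem (v : Fin n → ℝ) : sInf (MS n v) ∈ MS n v :=
  Nat.sInf_mem (MS_nonempty v)


lemma core1 {m k : ℕ} (hk : k < m) {v v' : Fin n → ℝ}
    (hv' : ∀ j, pad n v' j = if j < m then pad n v ((j + k) % m) else pad n v j)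
    (hb : W n v m = 0) : ∀ i, i ≤ m → W n v' i = W n v ((i + k) % m) - W n v k := by
  intro i
  induction i with
  | zero => intro _; simp [W_zero, Nat.mod_eq_of_lt hk]
  | succ i ih =>
    intro hi
    have him : i < m := hi
    have hm0 : 0 < m := lt_of_le_of_lt (Nat.zero_le _) hk
    rw [W_succ, ih (le_of_lt him), hv' i, if_pos him]
    have key : W n v ((i + 1 + k) % m) = W n v ((i + k) % m) + pad n v ((i + k) % m) := by
      have hx : (i + k) % m < m := Nat.mod_lt _ hm0
      have hmm : (i + 1 + k) % m = ((i + k) % m + 1) % m := by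
        rw [Nat.mod_add_mod]
        congr 1
        omega
      rcases eq_or_lt_of_le (Nat.succ_le_of_lt hx) with h | h
      · have h' : (i + k) % m + 1 = m := h
        rw [hmm, h', Nat.mod_self, W_zero, ← W_succ, h', hb]
      · rw [hmm, Nat.mod_eq_of_lt h, W_succ]
    rw [key]; ring

lemma core2 {m k : ℕ} (hk : k < m) {v v' : Fin n → ℝ}
    (hv' : ∀ j, pad n v' j = if j < m then pad n v ((j + k) % m) else pad n v j)
    (hb : W n v m = 0) : ∀ i, m ≤ i → W n v' i = W n v i := by
  intro i
  induction i with
  | zero => intro h; simp [W_zero]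
  | succ i ih =>
    intro hi
    rcases eq_or_lt_of_le hi with h | h
    · have := core1 hk hv' hb m le_rfl
      rw [← h, this, Nat.add_mod_left, Nat.mod_eq_of_lt hk, hb]
      ring
    · have him : m ≤ i := Nat.lt_succ_iff.1 h
      rw [W_succ, W_succ, ih him, hv' i, if_neg (by omega)]

lemma mem_MS_iff {v : Fin n → ℝ} {i : ℕ} :
    i ∈ MS n v ↔ i ≤ pσ n v ∧ ∀ j ≤ pσ n v, W n v i ≤ W n v j := Iff.rfl

lemma rotate_spec {m k f l : ℕ} (hmn : m ≤ n) {v v' : Fin n → ℝ}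
    (hσv : pσ n v = m) (hb : W n v m = 0)
    (hf : sInf (MS n v) = f) (hl : sSup (MS n v) = l)
    (h0 : 0 ∉ MS n v)
    (hk : k = (f + l) % m)
    (hv' : ∀ j, pad n v' j = if j < m then pad n v ((j + k) % m) else pad n v j) :
    pσ n v' = m ∧ sInf (MS n v') = m - l ∧ sSup (MS n v') = m - f := by
  have hMS : ∀ i, i ∈ MS n v ↔ i ≤ m ∧ ∀ j ≤ m, W n v i ≤ W n v j := by
    intro i; rw [mem_MS_iff, hσv]
  have hbdd : BddAbove (MS n v) := ⟨pσ n v, fun _ h => h.1⟩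
  -- facts about f and l
  have hfm : f ∈ MS n v := hf ▸ sInf_MS_mem v
  have hlm : l ∈ MS n v := hl ▸ Nat.sSup_mem (MS_nonempty v) hbdd
  have hf1 : 1 ≤ f := by
    rcases Nat.eq_zero_or_pos f with h | h
    · exact absurd (h ▸ hfm) h0
    · exact h
  have hfl : f ≤ l := hl ▸ le_csSup hbdd hfm
  have hlm' : l ≤ m := ((hMS l).1 hlm).1
  have hllt : l < m := by
    rcases eq_or_lt_of_le hlm' with h | h
    · exfalso
      apply h0
      rw [hMS]
      refine ⟨Nat.zero_le _, fun j hj => ?_⟩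
      rw [W_zero, ← hb, ← h]
      exact ((hMS l).1 hlm).2 j hj
    · exact h
  have hm2 : 2 ≤ m := by omega
  have hm0 : 0 < m := by omega
  have hklt : k < m := hk ▸ Nat.mod_lt _ hm0
  have hkcase : (f + l < m ∧ k = f + l) ∨ (m ≤ f + l ∧ k = f + l - m) := by
    rcases lt_or_ge (f + l) m with h | h
    · exact Or.inl ⟨h, hk.trans (Nat.mod_eq_of_lt h)⟩
    · refine Or.inr ⟨h, ?_⟩
      rw [hk, Nat.mod_eq_sub_mod h, Nat.mod_eq_of_lt (by omega)]
  have hA : ∀ i ≤ m, W n v' i = W n v ((i + k) % m) - W n v k := core1 hklt hv' hb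
  have hB : ∀ i, m ≤ i → W n v' i = W n v i := core2 hklt hv' hb
  have hWm' : W n v' m = 0 := by rw [hB m le_rfl, hb]
  -- σ of v'
  have hσ' : pσ n v' = m := by
    obtain ⟨h1, h2, h3⟩ := pσ_eq_iff.1 hσv
    exact pσ_eq_iff.2 ⟨h1, le_of_eq hWm', fun j hj hjn => by
      rw [hB j (le_of_lt hj)]; exact h3 j hj hjn⟩
  -- minimality transfer
  have hWmin : ∀ x ≤ m, W n v f ≤ W n v x := fun x hx => ((hMS f).1 hfm).2 x hx
  have hsur : ∀ x < m, ∃ j ≤ m, (j + k) % m = x := by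
    intro x hx
    rcases le_or_gt k x with h | h
    · exact ⟨x - k, by omega, by rw [Nat.sub_add_cancel h, Nat.mod_eq_of_lt hx]⟩
    · refine ⟨x + m - k, by omega, ?_⟩
      rw [show x + m - k + k = x + m by omega, Nat.add_mod_right, Nat.mod_eq_of_lt hx]
  have hMS' : ∀ i, i ∈ MS n v' ↔ i ≤ m ∧ (i + k) % m ∈ MS n v := by
    intro i
    rw [mem_MS_iff, hσ']
    constructor
    · rintro ⟨hi, hmin⟩
      refine ⟨hi, (hMS _).2 ⟨le_of_lt (Nat.mod_lt _ hm0), fun x hxm => ?_⟩⟩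
      rcases eq_or_lt_of_le hxm with h | h
      · -- x = m : use W v m = W v 0
        obtain ⟨j0, hj0, hj0e⟩ := hsur 0 hm0
        have := hmin j0 hj0
        rw [hA i hi, hA j0 hj0, hj0e, W_zero] at this
        subst h
        rw [hb]
        linarith
      · obtain ⟨j0, hj0, hj0e⟩ := hsur x h
        have := hmin j0 hj0
        rw [hA i hi, hA j0 hj0, hj0e] at this
        linarith
    · rintro ⟨hi, hx⟩
      refine ⟨hi, fun j hj => ?_⟩
      rw [hA i hi, hA j hj]
      have := ((hMS _).1 hx).2 ((j + k) % m) (le_of_lt (Nat.mod_lt _ hm0))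
      linarith
  -- the explicit form of MS v'
  have hfwd : ∀ x ∈ MS n v, x + (m - l) - f ∈ MS n v' := by
    intro x hx
    have hxf : f ≤ x := hf ▸ Nat.sInf_le hx
    have hxl : x ≤ l := hl ▸ le_csSup hbdd hx
    rw [hMS']
    refine ⟨by omega, ?_⟩
    have : (x + (m - l) - f + k) % m = x := by
      rcases hkcase with ⟨h1, h2⟩ | ⟨h1, h2⟩
      · rw [show x + (m - l) - f + k = x + m by omega, Nat.add_mod_right,
          Nat.mod_eq_of_lt (by omega)]
      · rw [show x + (m - l) - f + k = x by omega, Nat.mod_eq_of_lt (by omega)]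
    rw [this]; exact hx
  have hbwd : ∀ i ∈ MS n v', m - l ≤ i ∧ i ≤ m - f := by
    intro i hi
    rw [hMS'] at hi
    obtain ⟨hi1, hi2⟩ := hi
    set x := (i + k) % m with hxdef
    have hxf : f ≤ x := hf ▸ Nat.sInf_le hi2
    have hxl : x ≤ l := hl ▸ le_csSup hbdd hi2
    obtain ⟨q, hq⟩ : ∃ q, i + k = m * q + x := ⟨(i + k) / m, (Nat.div_add_mod _ _).symm⟩
    have hxlt : x < m := Nat.mod_lt _ hm0
    have hql : q < 2 := by
      by_contra hq2
      push_neg at hq2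
      have : m * 2 ≤ m * q := Nat.mul_le_mul_left m hq2
      omega
    rcases (by omega : q = 0 ∨ q = 1) with rfl | rfl <;>
      rcases hkcase with ⟨h1, h2⟩ | ⟨h1, h2⟩ <;> omega
  have hne' : (MS n v').Nonempty := ⟨f + (m - l) - f, hfwd f hfm⟩
  have hml : m - l ∈ MS n v' := by
    have := hfwd f hfm
    rwa [show f + (m - l) - f = m - l by omega] at this
  have hmf : m - f ∈ MS n v' := by
    have := hfwd l hlm
    rwa [show l + (m - l) - f = m - f by omega] at this
  refine ⟨hσ', ?_, ?_⟩
  · exact le_antisymm (Nat.sInf_le hml) (le_csInf hne' (fun i hi => (hbwd i hi).1))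
  · exact le_antisymm (csSup_le hne' (fun i hi => (hbwd i hi).2))
      (le_csSup ⟨pσ n v', fun _ h => h.1⟩ hmf)

def Ev (n m a b : ℕ) : Set (Fin n → ℝ) :=
  {v | pσ n v = m ∧ W n v m = 0 ∧ pF n v = a ∧ pF' n v = b}

def keyk (m a b : ℕ) : ℕ := ((m - b) + a) % m

lemma rotate_mem {m a b : ℕ} {v v' : Fin n → ℝ} (hab : a ≠ b)
    (hv : v ∈ Ev n m a b)
    (hv' : ∀ j, pad n v' j = if j < m then pad n v ((j + keyk m a b) % m) else pad n v j) :
    v' ∈ Ev n m b a := by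
  obtain ⟨hσv, hb, hFa, hF'b⟩ := hv
  have hmn : m ≤ n := hσv ▸ pσ_le v
  set f := sInf (MS n v) with hfdef
  set l := sSup (MS n v) with hldef
  have hbdd : BddAbove (MS n v) := ⟨pσ n v, fun _ h => h.1⟩
  have hlM : l ∈ MS n v := Nat.sSup_mem (MS_nonempty v) hbdd
  have hfM : f ∈ MS n v := sInf_MS_mem v
  have hlm : l ≤ m := hσv ▸ hlM.1
  have hfm : f ≤ m := hσv ▸ hfM.1
  have h0 : 0 ∉ MS n v := by
    intro h0
    have hmem : m ∈ MS n v := by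
      rw [mem_MS_iff, hσv]
      refine ⟨le_rfl, fun j hj => ?_⟩
      rw [hb, ← W_zero v]
      exact h0.2 j (hσv ▸ hj : j ≤ pσ n v)
    have hlm' : l = m := le_antisymm hlm (le_csSup hbdd hmem)
    have hf0 : f = 0 := Nat.le_zero.1 (Nat.sInf_le h0)
    apply hab
    rw [← hFa, ← hF'b, pF, pF', ← hldef, ← hfdef, hlm', hf0, hσv, Nat.sub_zero]
  have hf1 : 1 ≤ f := by
    rcases Nat.eq_zero_or_pos f with h | h
    · exact absurd (h ▸ hfM) h0
    · exact h
  have hla : l = a := by rw [← hFa, pF]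
  have hbf : b = m - f := by rw [← hF'b, pF', hσv]
  have hm0 : 0 < m := by omega
  have hk : keyk m a b = (f + l) % m := by rw [keyk]; congr 1; omega
  have hklt : keyk m a b < m := hk ▸ Nat.mod_lt _ hm0
  obtain ⟨hσ', hinf', hsup'⟩ :=
    rotate_spec hmn hσv hb hfdef.symm hldef.symm h0 hk hv'
  have hWm' : W n v' m = 0 := by
    rw [core2 hklt hv' hb m le_rfl, hb]
  refine ⟨hσ', hWm', ?_, ?_⟩
  · rw [pF, hsup']; omega
  · rw [pF', hσ', hinf']; omega

def cyc (n m k : ℕ) (hmn : m ≤ n) (hk : k < m) : Fin n ≃ Fin n where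
  toFun i := if _ : (i : ℕ) < m then
      ⟨((i : ℕ) + k) % m, lt_of_lt_of_le (Nat.mod_lt _ (by omega)) hmn⟩ else i
  invFun i := if _ : (i : ℕ) < m then
      ⟨((i : ℕ) + (m - k)) % m, lt_of_lt_of_le (Nat.mod_lt _ (by omega)) hmn⟩ else i
  left_inv i := by
    by_cases h : (i : ℕ) < m
    · have h2 : ((i : ℕ) + k) % m < m := Nat.mod_lt _ (by omega)
      simp only [dif_pos h, dif_pos h2]
      apply Fin.ext
      show (((i : ℕ) + k) % m + (m - k)) % m = (i : ℕ)
      rw [Nat.mod_add_mod, show (i : ℕ) + k + (m - k) = (i : ℕ) + m by omega,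
        Nat.add_mod_right, Nat.mod_eq_of_lt h]
    · simp only [dif_neg h]
  right_inv i := by
    by_cases h : (i : ℕ) < m
    · have h2 : ((i : ℕ) + (m - k)) % m < m := Nat.mod_lt _ (by omega)
      simp only [dif_pos h, dif_pos h2]
      apply Fin.ext
      show (((i : ℕ) + (m - k)) % m + k) % m = (i : ℕ)
      rw [Nat.mod_add_mod, show (i : ℕ) + (m - k) + k = (i : ℕ) + m by omega,
        Nat.add_mod_right, Nat.mod_eq_of_lt h]
    · simp only [dif_neg h]

lemma pad_comp_cyc {m k : ℕ} (hmn : m ≤ n) (hk : k < m) (v : Fin n → ℝ) (j : ℕ) :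
    pad n (v ∘ cyc n m k hmn hk) j = if j < m then pad n v ((j + k) % m) else pad n v j := by
  by_cases hjn : j < n
  · have : pad n (v ∘ cyc n m k hmn hk) j = v (cyc n m k hmn hk ⟨j, hjn⟩) := by
      rw [pad, dif_pos hjn]; rfl
    rw [this]
    by_cases hjm : j < m
    · rw [if_pos hjm]
      have h2 : (j + k) % m < n := lt_of_lt_of_le (Nat.mod_lt _ (by omega)) hmn
      rw [pad, dif_pos h2]
      show v _ = v _
      congr 1
      rw [cyc]
      simp only [Equiv.coe_fn_mk]
      rw [dif_pos (show ((⟨j, hjn⟩ : Fin n) : ℕ) < m from hjm)]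
    · rw [if_neg hjm]
      rw [pad, dif_pos hjn]
      congr 1
      rw [cyc]
      simp only [Equiv.coe_fn_mk]
      rw [dif_neg (show ¬ ((⟨j, hjn⟩ : Fin n) : ℕ) < m from hjm)]
  · have hjm : ¬ j < m := by omega
    rw [if_neg hjm, pad, pad, dif_neg hjn, dif_neg hjn]

lemma keyk_cancel {m a b j : ℕ} (hm0 : 0 < m) (ha : a ≤ m) (hb : b ≤ m) (hj : j < m) :
    ((j + keyk m b a) % m + keyk m a b) % m = j := by
  rw [keyk, keyk, Nat.mod_add_mod]
  have h1 : (j + (m - a + b) % m + (m - b + a) % m) % m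
      = (j + (m - a + b) + (m - b + a)) % m :=
    ((Nat.mod_modEq (m - a + b) m).add_left j).add (Nat.mod_modEq (m - b + a) m)
  rw [h1, show j + (m - a + b) + (m - b + a) = j + m + m by omega,
    Nat.add_mod_right, Nat.add_mod_right, Nat.mod_eq_of_lt hj]

lemma cyc_apply_val {m k : ℕ} (hmn : m ≤ n) (hk : k < m) (i : Fin n) :
    ((cyc n m k hmn hk i : Fin n) : ℕ)
      = if (i : ℕ) < m then ((i : ℕ) + k) % m else (i : ℕ) := by
  by_cases h : (i : ℕ) < m
  · rw [cyc]
    simp only [Equiv.coe_fn_mk]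
    rw [dif_pos h, if_pos h]
  · rw [cyc]
    simp only [Equiv.coe_fn_mk]
    rw [dif_neg h, if_neg h]

lemma Ev_eq_preimage {m a b : ℕ} (hab : a ≠ b) (hm0 : 0 < m) (hmn : m ≤ n) :
    Ev n m a b =
      (fun v => v ∘ cyc n m (keyk m a b) hmn (Nat.mod_lt _ hm0)) ⁻¹' Ev n m b a := by
  ext v
  constructor
  · intro hv
    exact rotate_mem hab hv (pad_comp_cyc hmn (Nat.mod_lt _ hm0) v)
  · intro hv
    set u := v ∘ cyc n m (keyk m a b) hmn (Nat.mod_lt _ hm0) with hu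
    have h2 : u ∈ Ev n m b a := hv
    have ha' : a ≤ m := by rw [← h2.2.2.2, pF', h2.1]; omega
    have hb' : b ≤ m := by
      have := (pF_mem u).1
      rw [h2.1, h2.2.2.1] at this
      exact this
    have h3 : u ∘ cyc n m (keyk m b a) hmn (Nat.mod_lt _ hm0) ∈ Ev n m a b :=
      rotate_mem hab.symm h2 (pad_comp_cyc hmn (Nat.mod_lt _ hm0) u)
    have heq : u ∘ cyc n m (keyk m b a) hmn (Nat.mod_lt _ hm0) = v := by
      funext i
      show v (cyc n m (keyk m a b) hmn _ (cyc n m (keyk m b a) hmn _ i)) = v i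
      congr 1
      apply Fin.ext
      have hk1 : keyk m a b < m := Nat.mod_lt _ hm0
      have hk2 : keyk m b a < m := Nat.mod_lt _ hm0
      show ((cyc n m (keyk m a b) hmn hk1 (cyc n m (keyk m b a) hmn hk2 i) : Fin n) : ℕ) = i
      rw [cyc_apply_val, cyc_apply_val]
      by_cases h : (i : ℕ) < m
      · rw [if_pos h]
        have h2' : ((i : ℕ) + keyk m b a) % m < m := Nat.mod_lt _ (by omega)
        rw [if_pos h2']
        exact keyk_cancel hm0 ha' hb' h
      · rw [if_neg h, if_neg h]
    rw [heq] at h3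
    exact h3

lemma measurable_W (i : ℕ) : Measurable (fun v : Fin n → ℝ => W n v i) := by
  apply Finset.measurable_sum
  intro j _
  by_cases h : j < n
  · simp only [pad, dif_pos h]
    exact measurable_pi_apply _
  · simp only [pad, dif_neg h]
    exact measurable_const

lemma measSet_pσ (m : ℕ) : MeasurableSet {v : Fin n → ℝ | pσ n v = m} := by
  by_cases hmn : m ≤ n
  · have : {v : Fin n → ℝ | pσ n v = m} =
        {v | W n v m ≤ 0} ∩ ⋂ (j : ℕ) (_ : m < j) (_ : j ≤ n), {v | 0 < W n v j} := by
      ext v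
      simp only [Set.mem_setOf_eq, Set.mem_inter_iff, Set.mem_iInter, pσ_eq_iff]
      tauto
    rw [this]
    exact (measurableSet_le (measurable_W m) measurable_const).inter
      (MeasurableSet.iInter fun j => MeasurableSet.iInter fun _ =>
        MeasurableSet.iInter fun _ =>
          measurableSet_lt measurable_const (measurable_W j))
  · have : {v : Fin n → ℝ | pσ n v = m} = ∅ := by
      ext v
      simp only [Set.mem_setOf_eq, Set.mem_empty_iff_false, iff_false]
      intro h
      exact hmn (pσ_eq_iff.1 h).1
    rw [this]
    exact MeasurableSet.empty

lemma measSet_MSmem (i : ℕ) : MeasurableSet {v : Fin n → ℝ | i ∈ MS n v} := by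
  have : {v : Fin n → ℝ | i ∈ MS n v} =
      ⋃ (m' : ℕ) (_ : m' ≤ n), {v | pσ n v = m'} ∩
        ({v : Fin n → ℝ | i ≤ m'} ∩ ⋂ (j : ℕ) (_ : j ≤ m'), {v | W n v i ≤ W n v j}) := by
    ext v
    simp only [Set.mem_setOf_eq, Set.mem_iUnion, Set.mem_inter_iff, Set.mem_iInter,
      mem_MS_iff]
    constructor
    · rintro ⟨h1, h2⟩
      exact ⟨pσ n v, pσ_le v, rfl, h1, fun j hj => h2 j hj⟩
    · rintro ⟨m', _, hm', h1, h2⟩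
      exact ⟨hm' ▸ h1, fun j hj => h2 j (hm' ▸ hj)⟩
  rw [this]
  refine MeasurableSet.iUnion fun m' => MeasurableSet.iUnion fun _ =>
    (measSet_pσ m').inter (MeasurableSet.inter ?_ <| MeasurableSet.iInter fun j =>
      MeasurableSet.iInter fun _ => measurableSet_le (measurable_W i) (measurable_W j))
  by_cases h : i ≤ m' <;> simp [h]

lemma pF_eq_iff {v : Fin n → ℝ} {a : ℕ} :
    pF n v = a ↔ a ∈ MS n v ∧ ∀ j ∈ MS n v, j ≤ a := by
  have hbdd : BddAbove (MS n v) := ⟨pσ n v, fun _ h => h.1⟩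
  constructor
  · rintro rfl
    exact ⟨pF_mem v, fun j hj => le_pF hj⟩
  · rintro ⟨h1, h2⟩
    exact le_antisymm (csSup_le (MS_nonempty v) h2) (le_csSup hbdd h1)

lemma sInf_MS_eq_iff {v : Fin n → ℝ} {c : ℕ} :
    sInf (MS n v) = c ↔ c ∈ MS n v ∧ ∀ j < c, j ∉ MS n v := by
  constructor
  · rintro rfl
    exact ⟨sInf_MS_mem v, fun j hj hmem => absurd (Nat.sInf_le hmem) (not_le.2 hj)⟩
  · rintro ⟨h1, h2⟩
    refine le_antisymm (Nat.sInf_le h1) ?_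
    by_contra h
    exact h2 _ (not_le.1 h) (sInf_MS_mem v)

lemma measSet_pF (a : ℕ) : MeasurableSet {v : Fin n → ℝ | pF n v = a} := by
  have : {v : Fin n → ℝ | pF n v = a} =
      {v : Fin n → ℝ | a ∈ MS n v} ∩ ⋂ (j : ℕ) (_ : a < j), {v | j ∈ MS n v}ᶜ := by
    ext v
    simp only [Set.mem_setOf_eq, Set.mem_inter_iff, Set.mem_iInter, Set.mem_compl_iff,
      pF_eq_iff]
    constructor
    · rintro ⟨h1, h2⟩
      exact ⟨h1, fun j hj hmem => absurd (h2 j hmem) (not_le.2 hj)⟩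
    · rintro ⟨h1, h2⟩
      refine ⟨h1, fun j hj => ?_⟩
      by_contra h
      exact h2 j (not_le.1 h) hj
  rw [this]
  exact (measSet_MSmem a).inter <| MeasurableSet.iInter fun j =>
    MeasurableSet.iInter fun _ => (measSet_MSmem j).compl

lemma measSet_pF' (b : ℕ) : MeasurableSet {v : Fin n → ℝ | pF' n v = b} := by
  have : {v : Fin n → ℝ | pF' n v = b} =
      ⋃ (m' : ℕ) (_ : m' ≤ n), ⋃ (c : ℕ) (_ : m' - c = b),
        ({v | pσ n v = m'} ∩ ({v : Fin n → ℝ | c ∈ MS n v} ∩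
          ⋂ (j : ℕ) (_ : j < c), {v | j ∈ MS n v}ᶜ)) := by
    ext v
    simp only [Set.mem_setOf_eq, Set.mem_iUnion, Set.mem_inter_iff, Set.mem_iInter,
      Set.mem_compl_iff]
    constructor
    · intro h
      exact ⟨pσ n v, pσ_le v, sInf (MS n v), by rw [← h, pF'], rfl,
        (sInf_MS_eq_iff.1 rfl).1, fun j hj => (sInf_MS_eq_iff.1 rfl).2 j hj⟩
    · rintro ⟨m', _, c, hc, hσ, h1, h2⟩
      rw [pF', sInf_MS_eq_iff.2 ⟨h1, h2⟩, hσ, hc]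
  rw [this]
  exact MeasurableSet.iUnion fun m' => MeasurableSet.iUnion fun _ =>
    MeasurableSet.iUnion fun c => MeasurableSet.iUnion fun _ =>
      (measSet_pσ m').inter ((measSet_MSmem c).inter <|
        MeasurableSet.iInter fun j => MeasurableSet.iInter fun _ => (measSet_MSmem j).compl)

lemma measurable_pσ : Measurable (pσ n) :=
  measurable_to_countable' fun m => measSet_pσ m

lemma measurable_pF : Measurable (pF n) :=
  measurable_to_countable' fun a => measSet_pF a

lemma measurable_pF' : Measurable (pF' n) :=
  measurable_to_countable' fun b => measSet_pF' b

lemma measSet_Ev (m a b : ℕ) : MeasurableSet (Ev n m a b) := by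
  have : Ev n m a b = {v | pσ n v = m} ∩ ({v | W n v m = 0} ∩
      ({v | pF n v = a} ∩ {v | pF' n v = b})) := rfl
  rw [this]
  exact (measSet_pσ m).inter (((measurable_W m) (measurableSet_singleton 0)).inter
    ((measSet_pF a).inter (measSet_pF' b)))

/-- the bridge event -/
lemma measSet_bridge : MeasurableSet {v : Fin n → ℝ | W n v (pσ n v) = 0} := by
  have : {v : Fin n → ℝ | W n v (pσ n v) = 0} =
      ⋃ (m' : ℕ) (_ : m' ≤ n), ({v | pσ n v = m'} ∩ {v | W n v m' = 0}) := by
    ext v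
    simp only [Set.mem_setOf_eq, Set.mem_iUnion, Set.mem_inter_iff]
    constructor
    · intro h
      exact ⟨pσ n v, pσ_le v, rfl, h⟩
    · rintro ⟨m', _, hσ, h⟩
      rw [hσ, h]
  rw [this]
  exact MeasurableSet.iUnion fun m' => MeasurableSet.iUnion fun _ =>
    (measSet_pσ m').inter ((measurable_W m') (measurableSet_singleton 0))

lemma pi_map_precomp (m0 : Measure ℝ) [IsProbabilityMeasure m0] (e : Fin n ≃ Fin n) :
    (Measure.pi fun _ : Fin n => m0).map (fun v (i : Fin n) => v (e i))
      = Measure.pi fun _ : Fin n => m0 := by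
  have hmp := measurePreserving_piCongrLeft (fun _ : Fin n => m0) e.symm
  have hco : ⇑(MeasurableEquiv.piCongrLeft (fun _ : Fin n => ℝ) e.symm)
      = fun v (i : Fin n) => v (e i) := by
    funext v
    funext i
    have h1 := MeasurableEquiv.piCongrLeft_apply_apply e.symm
      (β := fun _ : Fin n => ℝ) v (e i)
    rw [Equiv.symm_apply_apply] at h1
    exact h1
  rw [← hco]
  exact hmp.map_eq

lemma map_vec_eq_pi {Ω : Type*} [MeasurableSpace Ω] (μ : Measure Ω) [IsProbabilityMeasure μ]
    (ζ : ℕ → Ω → ℝ) (hmeas : ∀ i, Measurable (ζ i))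
    (hindep : ProbabilityTheory.iIndepFun ζ μ)
    (hident : ∀ i, μ.map (ζ i) = μ.map (ζ 0)) :
    μ.map (fun ω (i : Fin n) => ζ i ω) = Measure.pi fun _ : Fin n => μ.map (ζ 0) := by
  have hm0 : IsProbabilityMeasure (μ.map (ζ 0)) :=
    Measure.isProbabilityMeasure_map (hmeas 0).aemeasurable
  have hvec : Measurable (fun ω (i : Fin n) => ζ i ω) :=
    measurable_pi_lambda _ fun i => hmeas i
  refine (Measure.pi_eq fun s hs => ?_).symm
  classical
  set sets : ℕ → Set ℝ := fun j => if h : j < n then s ⟨j, h⟩ else Set.univ with hsets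
  have hsetsm : ∀ j, j ∈ Finset.range n → MeasurableSet (sets j) := by
    intro j _
    by_cases h : j < n
    · simp only [hsets, dif_pos h]; exact hs _
    · simp only [hsets, dif_neg h]; exact MeasurableSet.univ
  rw [Measure.map_apply hvec (MeasurableSet.univ_pi hs)]
  have hpre : (fun ω (i : Fin n) => ζ i ω) ⁻¹' Set.pi Set.univ s
      = ⋂ j ∈ Finset.range n, ζ j ⁻¹' sets j := by
    ext ω
    simp only [Set.mem_preimage, Set.mem_pi, Set.mem_univ, forall_true_left,
      Set.mem_iInter, Finset.mem_range]
    constructor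
    · intro h j hj
      simp only [hsets, dif_pos hj]
      exact h ⟨j, hj⟩
    · intro h i
      have := h i i.isLt
      simpa only [hsets, dif_pos i.isLt, Fin.eta] using this
  rw [hpre, hindep.measure_inter_preimage_eq_mul (Finset.range n) hsetsm]
  rw [← Fin.prod_univ_eq_prod_range (fun j => μ (ζ j ⁻¹' sets j)) n]
  apply Finset.prod_congr rfl
  intro i _
  have h1 : sets (i : ℕ) = s i := by
    simp only [hsets, dif_pos i.isLt, Fin.eta]
  rw [h1, ← Measure.map_apply (hmeas i) (hs i), hident i]

lemma Ev_empty_of_gt {m a b : ℕ} (h : n < m) : Ev n m a b = ∅ := by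
  rw [Set.eq_empty_iff_forall_notMem]
  intro v hv
  have := hv.1 ▸ pσ_le v
  omega

lemma Ev_zero {a b : ℕ} (hab : a ≠ b) : Ev n 0 a b = ∅ := by
  rw [Set.eq_empty_iff_forall_notMem]
  intro v hv
  obtain ⟨hσv, _, hFa, hF'b⟩ := hv
  apply hab
  have h1 : pF n v ≤ 0 := hσv ▸ (pF_mem v).1
  rw [← hFa, ← hF'b, pF', hσv]
  omega

lemma pi_Ev_swap (m0 : Measure ℝ) [IsProbabilityMeasure m0] (m a b : ℕ) :
    Measure.pi (fun _ : Fin n => m0) (Ev n m a b)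
      = Measure.pi (fun _ : Fin n => m0) (Ev n m b a) := by
  rcases eq_or_ne a b with rfl | hab
  · rfl
  by_cases hmn : m ≤ n
  · by_cases hm0 : 0 < m
    · rw [Ev_eq_preimage hab hm0 hmn]
      have hT : Measurable
          (fun (v : Fin n → ℝ) (i : Fin n) => v (cyc n m (keyk m a b) hmn (Nat.mod_lt _ hm0) i)) :=
        measurable_pi_lambda _ fun i => measurable_pi_apply _
      rw [show ((fun v : Fin n → ℝ => v ∘ ⇑(cyc n m (keyk m a b) hmn (Nat.mod_lt _ hm0)))
            ⁻¹' Ev n m b a)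
          = ((fun (v : Fin n → ℝ) (i : Fin n) => v (cyc n m (keyk m a b) hmn (Nat.mod_lt _ hm0) i))
            ⁻¹' Ev n m b a) from rfl,
        ← Measure.map_apply hT (measSet_Ev m b a), pi_map_precomp m0 _]
    · have hm : m = 0 := by omega
      subst hm
      rw [Ev_zero hab, Ev_zero (Ne.symm hab)]
  · rw [Ev_empty_of_gt (by omega), Ev_empty_of_gt (by omega)]

/-- the global event in path space -/
def bigE (n a b : ℕ) : Set (Fin n → ℝ) :=
  {v | W n v (pσ n v) = 0 ∧ pF n v = a ∧ pF' n v = b}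

lemma measSet_bigE (a b : ℕ) : MeasurableSet (bigE n a b) := by
  have : bigE n a b = {v | W n v (pσ n v) = 0} ∩ ({v | pF n v = a} ∩ {v | pF' n v = b}) := rfl
  rw [this]
  exact measSet_bridge.inter ((measSet_pF a).inter (measSet_pF' b))

lemma bigE_eq_iUnion (a b : ℕ) : bigE n a b = ⋃ m : ℕ, Ev n m a b := by
  ext v
  simp only [bigE, Set.mem_setOf_eq, Set.mem_iUnion, Ev]
  constructor
  · rintro ⟨h1, h2, h3⟩
    exact ⟨pσ n v, rfl, h1, h2, h3⟩
  · rintro ⟨m, hm, h1, h2, h3⟩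
    exact ⟨hm ▸ h1, h2, h3⟩

lemma pi_bigE_swap (m0 : Measure ℝ) [IsProbabilityMeasure m0] (a b : ℕ) :
    Measure.pi (fun _ : Fin n => m0) (bigE n a b)
      = Measure.pi (fun _ : Fin n => m0) (bigE n b a) := by
  rw [bigE_eq_iUnion, bigE_eq_iUnion]
  have hdisj : ∀ (a b : ℕ), Pairwise (Function.onFun Disjoint (fun m => Ev n m a b)) := by
    intro a b m1 m2 hne
    rw [Function.onFun, Set.disjoint_left]
    intro v h1 h2
    exact hne (h1.1.symm.trans h2.1)
  rw [measure_iUnion (hdisj a b) (fun m => measSet_Ev m a b),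
    measure_iUnion (hdisj b a) (fun m => measSet_Ev m b a)]
  exact tsum_congr fun m => pi_Ev_swap m0 m a b

end Stmt19Aux

open Stmt19Aux

/-- Conditionally on {S_σ = 0}, the pair (→F, ←F) has exchangeable components:
(→F, ←F) and (←F, →F) have the same joint distribution. -/
theorem stmt_19 {Ω : Type*} [MeasurableSpace Ω] (μ : Measure Ω) [IsProbabilityMeasure μ]
    (n : ℕ) (ζ : ℕ → Ω → ℝ)
    (hmeas : ∀ i, Measurable (ζ i))
    (hindep : ProbabilityTheory.iIndepFun ζ μ)
    (hident : ∀ i, μ.map (ζ i) = μ.map (ζ 0))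
    (S : ℕ → Ω → ℝ) (hS : ∀ i ω, S i ω = ∑ j ∈ Finset.range i, ζ j ω)
    (σ : Ω → ℕ) (hσ : ∀ ω, σ ω = sSup {i | i ≤ n ∧ S i ω ≤ 0})
    (hpos : 0 < μ {ω | S (σ ω) ω = 0})
    (F F' : Ω → ℕ)
    (hF : ∀ ω, F ω = sSup {i | i ≤ σ ω ∧ S i ω = sInf ((fun j => S j ω) '' Set.Iic (σ ω))})
    (hF' : ∀ ω, F' ω =
      σ ω - sInf {i | i ≤ σ ω ∧ S i ω = sInf ((fun j => S j ω) '' Set.Iic (σ ω))}) :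
    (μ[|{ω | S (σ ω) ω = 0}]).map (fun ω => (F ω, F' ω))
      = (μ[|{ω | S (σ ω) ω = 0}]).map (fun ω => (F' ω, F ω)) := by
  classical
  set A := {ω | S (σ ω) ω = 0} with hAdef
  set vec : Ω → (Fin n → ℝ) := fun ω (i : Fin n) => ζ i ω with hvecdef
  have hvec : Measurable vec := measurable_pi_lambda _ fun i => hmeas i
  -- transfer of the walk
  have hWS : ∀ ω, ∀ i ≤ n, W n (vec ω) i = S i ω := by
    intro ω i hi
    rw [hS]
    apply Finset.sum_congr rfl
    intro j hj
    rw [pad, dif_pos (lt_of_lt_of_le (Finset.mem_range.1 hj) hi)]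
  have hσp : ∀ ω, pσ n (vec ω) = σ ω := by
    intro ω
    rw [hσ, pσ]
    congr 1
    ext i
    simp only [Set.mem_setOf_eq]
    constructor
    · rintro ⟨h1, h2⟩
      exact ⟨h1, by rwa [hWS ω i h1] at h2⟩
    · rintro ⟨h1, h2⟩
      exact ⟨h1, by rwa [hWS ω i h1]⟩
  have hσn : ∀ ω, σ ω ≤ n := fun ω => (hσp ω) ▸ pσ_le (vec ω)
  have hsetMS : ∀ ω,
      {i | i ≤ σ ω ∧ S i ω = sInf ((fun j => S j ω) '' Set.Iic (σ ω))} = MS n (vec ω) := by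
    intro ω
    rw [← MS_eq]
    have himg : (fun j => S j ω) '' Set.Iic (σ ω)
        = (fun j => W n (vec ω) j) '' Set.Iic (pσ n (vec ω)) := by
      rw [hσp ω]
      apply Set.image_congr
      intro j hj
      exact (hWS ω j (le_trans hj (hσn ω))).symm
    ext i
    simp only [Set.mem_setOf_eq]
    rw [himg, hσp ω]
    constructor
    · rintro ⟨h1, h2⟩
      exact ⟨h1, by rwa [hWS ω i (le_trans h1 (hσn ω))]⟩
    · rintro ⟨h1, h2⟩
      exact ⟨h1, by rwa [hWS ω i (le_trans h1 (hσn ω))] at h2⟩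
  have hFp : ∀ ω, F ω = pF n (vec ω) := by
    intro ω
    rw [hF ω, pF, hsetMS ω]
  have hF'p : ∀ ω, F' ω = pF' n (vec ω) := by
    intro ω
    rw [hF' ω, pF', hsetMS ω, hσp ω]
  have hAvec : A = vec ⁻¹' {v | W n v (pσ n v) = 0} := by
    ext ω
    simp only [hAdef, Set.mem_setOf_eq, Set.mem_preimage]
    rw [hσp ω, hWS ω (σ ω) (hσn ω)]
  have hAmeas : MeasurableSet A := by
    rw [hAvec]; exact hvec measSet_bridge
  have hFm : Measurable F := by
    have : F = fun ω => pF n (vec ω) := funext hFp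
    rw [this]; exact measurable_pF.comp hvec
  have hF'm : Measurable F' := by
    have : F' = fun ω => pF' n (vec ω) := funext hF'p
    rw [this]; exact measurable_pF'.comp hvec
  have hpi : μ.map vec = Measure.pi fun _ : Fin n => μ.map (ζ 0) :=
    map_vec_eq_pi μ ζ hmeas hindep hident
  haveI hm0i : IsProbabilityMeasure (μ.map (ζ 0)) :=
    Measure.isProbabilityMeasure_map (hmeas 0).aemeasurable
  -- the key pointwise identity
  have hkey : ∀ a b : ℕ, μ (A ∩ (fun ω => (F ω, F' ω)) ⁻¹' {(a, b)})
      = μ (A ∩ (fun ω => (F' ω, F ω)) ⁻¹' {(a, b)}) := by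
    intro a b
    have h1 : A ∩ (fun ω => (F ω, F' ω)) ⁻¹' {(a, b)} = vec ⁻¹' bigE n a b := by
      ext ω
      simp only [Set.mem_inter_iff, Set.mem_preimage, Set.mem_singleton_iff, Prod.mk.injEq,
        bigE, Set.mem_setOf_eq, hAvec]
      rw [hFp ω, hF'p ω]
      try tauto
    have h2 : A ∩ (fun ω => (F' ω, F ω)) ⁻¹' {(a, b)} = vec ⁻¹' bigE n b a := by
      ext ω
      simp only [Set.mem_inter_iff, Set.mem_preimage, Set.mem_singleton_iff, Prod.mk.injEq,
        bigE, Set.mem_setOf_eq, hAvec]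
      rw [hFp ω, hF'p ω]
      try tauto
    rw [h1, h2, ← Measure.map_apply hvec (measSet_bigE a b),
      ← Measure.map_apply hvec (measSet_bigE b a), hpi]
    exact pi_bigE_swap (μ.map (ζ 0)) a b
  -- conclude
  ext s hs
  rw [Measure.map_apply (hFm.prodMk hF'm) hs, Measure.map_apply (hF'm.prodMk hFm) hs]
  have hdecomp : ∀ (g : Ω → ℕ × ℕ), Measurable g →
      μ[|A] (g ⁻¹' s) = ∑' p : s, μ[|A] (g ⁻¹' {(p : ℕ × ℕ)}) := by
    intro g hg
    have hu : g ⁻¹' s = ⋃ p : s, g ⁻¹' {(p : ℕ × ℕ)} := by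
      ext ω
      simp only [Set.mem_preimage, Set.mem_iUnion, Set.mem_singleton_iff]
      exact ⟨fun h => ⟨⟨g ω, h⟩, rfl⟩, by rintro ⟨⟨p, hp⟩, h⟩; rw [h]; exact hp⟩
    rw [hu, measure_iUnion ?_ fun p => hg (measurableSet_singleton _)]
    intro p q hne
    rw [Function.onFun, Set.disjoint_left]
    intro ω h1 h2
    apply hne
    apply Subtype.ext
    rw [← h1, ← h2]
  rw [hdecomp _ (hFm.prodMk hF'm), hdecomp _ (hF'm.prodMk hFm)]
  apply tsum_congr
  rintro ⟨⟨a, b⟩, hp⟩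
  rw [cond_apply hAmeas, cond_apply hAmeas]
  congr 1
  exact hkey a b
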